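/- For every k ∈ ℕ there is a binary bidding game G_k such that, when G_k is played with discrete integer budgets summing to M < 2^k, no pure subgame-perfect equilibrium of G_k is Pareto-optimal: for some budget partitions the equilibrium outcome is strictly Pareto-dominated. -/

import Mathlib

/-- A game tree for two-player bidding games: leaves carry utilities for both players. -/
inductive GTree where
  | leaf : ℝ → ℝ → GTree
  | node : List GTree → GTree

namespace GTree

/-- Height of a game tree. -/
def height : GTree → ℕ
  | .leaf _ _ => 0
  | .node [] => 1
  | .node (c :: cs) => max (1 + height c) (height (.node cs))

/-- The list of leaf payoff pairs of a game tree. -/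
def leaves : GTree → List (ℝ × ℝ)
  | .leaf a b => [(a, b)]
  | .node [] => []
  | .node (c :: cs) => leaves c ++ leaves (.node cs)

/-- Subtree relation. -/
inductive Subtree : GTree → GTree → Prop
  | refl (s : GTree) : Subtree s s
  | step {s c : GTree} {cs : List GTree} : c ∈ cs → Subtree s c → Subtree s (.node cs)

/-- A (Markov) strategy profile in the discrete-bid game: at each subgame and
integer budget of player 1, it gives the integer bids `(b1, b2)` and the indices
of the children each player would move to upon winning the round. -/
abbrev Profile := GTree → ℕ → ℕ × ℕ × ℕ × ℕ

/-- Play with explicit fuel. The higher bidder (ties to player 1) pays her bid to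
the other player and moves to her chosen child. -/
def playAux (γ : Profile) : ℕ → GTree → ℕ → ℝ × ℝ
  | _, .leaf u1 u2, _ => (u1, u2)
  | 0, .node _, _ => (0, 0)
  | n + 1, .node cs, B1 =>
      let a := γ (.node cs) B1
      if a.2.1 ≤ a.1 then
        playAux γ n (cs.getD a.2.2.1 (.leaf 0 0)) (B1 - a.1)
      else
        playAux γ n (cs.getD a.2.2.2 (.leaf 0 0)) (B1 + a.2.1)

/-- The outcome (utility pair at the reached leaf) from playing `γ` in `G` with
initial budget `B1` for player 1 (player 2 has `M - B1`). -/
def outcome (γ : Profile) (G : GTree) (B1 : ℕ) : ℝ × ℝ :=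
  playAux γ (height G) G B1

/-- Validity of an action tuple at a node with children `cs` under budget `B1`
out of total budget `M`. -/
def validAct (M : ℕ) (cs : List GTree) (B1 : ℕ) (a : ℕ × ℕ × ℕ × ℕ) : Prop :=
  a.1 ≤ B1 ∧ a.2.1 ≤ M - B1 ∧ a.2.2.1 < cs.length ∧ a.2.2.2 < cs.length

/-- Equilibrium conditions for an action tuple `a` at a node with children `cs`,
budget `B1` of player 1 out of total `M`, given that all subgames follow `γ`:
each player's designated move is optimal for her; the winner cannot gain by
winning with a different bid (and any move) nor by dropping the round; the loser
cannot gain by overbidding (with any move). -/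
def eqAct (M : ℕ) (γ : Profile) (cs : List GTree) (B1 : ℕ) (a : ℕ × ℕ × ℕ × ℕ) : Prop :=
  let b1 := a.1
  let b2 := a.2.1
  let c1 := cs.getD a.2.2.1 (.leaf 0 0)
  let c2 := cs.getD a.2.2.2 (.leaf 0 0)
  (∀ c ∈ cs, (outcome γ c (B1 - b1)).1 ≤ (outcome γ c1 (B1 - b1)).1) ∧
  (∀ c ∈ cs, (outcome γ c (B1 + b2)).2 ≤ (outcome γ c2 (B1 + b2)).2) ∧
  (if b2 ≤ b1 then
    (∀ b1', b1' ≤ B1 → b2 ≤ b1' → ∀ c ∈ cs,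
        (outcome γ c (B1 - b1')).1 ≤ (outcome γ c1 (B1 - b1)).1) ∧
    (0 < b2 → (outcome γ c2 (B1 + b2)).1 ≤ (outcome γ c1 (B1 - b1)).1) ∧
    (∀ b2', b2' ≤ M - B1 → b1 < b2' → ∀ c ∈ cs,
        (outcome γ c (B1 + b2')).2 ≤ (outcome γ c1 (B1 - b1)).2)
  else
    (∀ b2', b2' ≤ M - B1 → b1 < b2' → ∀ c ∈ cs,
        (outcome γ c (B1 + b2')).2 ≤ (outcome γ c2 (B1 + b2)).2) ∧
    ((outcome γ c1 (B1 - b1)).2 ≤ (outcome γ c2 (B1 + b2)).2) ∧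
    (∀ b1', b1' ≤ B1 → b2 ≤ b1' → ∀ c ∈ cs,
        (outcome γ c (B1 - b1')).1 ≤ (outcome γ c2 (B1 + b2)).1))

/-- `γ` is a pure subgame-perfect equilibrium of `G` with total budget `M`:
at every subgame and every budget partition `(B1, M - B1)` the prescribed actions
are valid and no player has a profitable unilateral deviation. -/
def IsPSPE (M : ℕ) (γ : Profile) (G : GTree) : Prop :=
  ∀ cs, Subtree (.node cs) G → ∀ B1 : ℕ, B1 ≤ M →
    validAct M cs B1 (γ (.node cs) B1) ∧ eqAct M γ cs B1 (γ (.node cs) B1)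

/-- Every internal node has at least one child. -/
def WF (G : GTree) : Prop := ∀ cs, Subtree (.node cs) G → cs ≠ []

/-- Every internal node has exactly two children. -/
def IsBinary (G : GTree) : Prop := ∀ cs, Subtree (.node cs) G → cs.length = 2

end GTree
namespace GTree

/-! ### The game -/

/-- Player 2's chain: she must strictly win every auction to reach `(85,50)`;
at any point player 1 would rather stop at `(87,10)`. -/
def Cch : ℕ → GTree
  | 0 => .leaf 85 50
  | j + 1 => .node [Cch j, .leaf 87 10]

def Atree (n : ℕ) : GTree := .node [.leaf 90 20, Cch n]

def Gk (n : ℕ) : GTree := .node [Atree n, .leaf 80 40]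

/-! ### Height and fuel -/

lemma height_node_cons (c : GTree) (cs : List GTree) :
    height (.node (c :: cs)) = max (1 + height c) (height (.node cs)) := by
  simp [height]

lemma height_le_of_mem {c : GTree} : ∀ {cs : List GTree}, c ∈ cs →
    1 + c.height ≤ height (.node cs) := by
  intro cs
  induction cs with
  | nil => intro h; cases h
  | cons c' cs ih =>
    intro h
    rw [height_node_cons]
    rcases List.mem_cons.mp h with h | h
    · subst h; omega
    · have := ih h; omega

lemma one_le_height_node (cs : List GTree) : 1 ≤ height (.node cs) := by
  cases cs with
  | nil => simp [height]
  | cons c cs => rw [height_node_cons]; omega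

lemma height_getD_lt {cs : List GTree} (i : ℕ) :
    height (cs.getD i (.leaf 0 0)) < height (.node cs) := by
  by_cases hi : i < cs.length
  · have hmem : cs.getD i (.leaf 0 0) ∈ cs := by
      rw [List.getD_eq_getElem _ _ hi]
      exact List.getElem_mem hi
    have := height_le_of_mem hmem
    omega
  · rw [List.getD_eq_default _ _ (le_of_not_gt hi)]
    have h1 := one_le_height_node cs
    have h2 : height (.leaf 0 0) = 0 := by simp [height]
    omega

lemma playAux_of_le (γ : Profile) :
    ∀ n (t : GTree), t.height ≤ n → ∀ B, playAux γ n t B = outcome γ t B := by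
  intro n
  induction n using Nat.strong_induction_on with
  | _ n ih =>
    intro t ht B
    match t with
    | .leaf a b => cases n <;> simp [playAux, outcome, height]
    | .node cs =>
      have h1 : 1 ≤ height (.node cs) := one_le_height_node cs
      obtain ⟨h, hh⟩ : ∃ h, height (.node cs) = h + 1 := ⟨height (.node cs) - 1, by omega⟩
      obtain ⟨m, hm⟩ : ∃ m, n = m + 1 := ⟨n - 1, by omega⟩
      subst hm
      have hchild : ∀ i, height (cs.getD i (.leaf 0 0)) ≤ h := by
        intro i
        have := height_getD_lt (cs := cs) i
        omega
      have hhm : h ≤ m := by omega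
      rw [outcome, hh]
      simp only [playAux]
      split_ifs with hcond
      · rw [ih m (by omega) _ (le_trans (hchild _) hhm) _,
          ih h (by omega) _ (hchild _) _]
      · rw [ih m (by omega) _ (le_trans (hchild _) hhm) _,
          ih h (by omega) _ (hchild _) _]

lemma height_Cch (j : ℕ) : height (Cch j) = j := by
  induction j with
  | zero => simp [Cch, height]
  | succ j ih =>
    show height (.node [Cch j, .leaf 87 10]) = j + 1
    rw [height_node_cons, height_node_cons, ih]
    simp [height]
    omega

lemma height_Atree (n : ℕ) : height (Atree n) = n + 1 := by
  show height (.node [.leaf 90 20, Cch n]) = n + 1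
  rw [height_node_cons, height_node_cons, height_Cch]
  simp [height]
  omega

lemma height_Gk (n : ℕ) : height (Gk n) = n + 2 := by
  show height (.node [Atree n, .leaf 80 40]) = n + 2
  rw [height_node_cons, height_node_cons, height_Atree]
  simp [height]
  omega

/-! ### Subtree facts -/

lemma subtree_trans {a b c : GTree} (h1 : Subtree a b) (h2 : Subtree b c) : Subtree a c := by
  induction h2 with
  | refl => exact h1
  | step hmem _ ih => exact .step hmem ih

lemma subtree_Cch_Cch {i j : ℕ} (h : i ≤ j) : Subtree (Cch i) (Cch j) := by
  induction j with
  | zero =>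
    have hi : i = 0 := by omega
    subst hi; exact .refl _
  | succ j ih =>
    rcases Nat.eq_or_lt_of_le h with h' | h'
    · subst h'; exact .refl _
    · exact .step (List.mem_cons_self) (ih (by omega))

lemma subtree_Atree_Gk (n : ℕ) : Subtree (Atree n) (Gk n) :=
  .step (by simp) (.refl _)

lemma subtree_Cch_Gk {i n : ℕ} (h : i ≤ n) : Subtree (Cch i) (Gk n) := by
  have h1 : Subtree (Cch n) (Atree n) := .step (by simp [Atree]) (.refl _)
  exact subtree_trans (subtree_Cch_Cch h) (subtree_trans h1 (subtree_Atree_Gk n))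

lemma no_subtree_node_leaf {cs : List GTree} {a b : ℝ} (h : Subtree (.node cs) (.leaf a b)) :
    False := by
  cases h

lemma binary_Cch : ∀ j, ∀ {cs : List GTree}, Subtree (.node cs) (Cch j) → cs.length = 2 := by
  intro j
  induction j with
  | zero => intro cs h; cases h
  | succ j ih =>
    intro cs h
    cases h with
    | refl => rfl
    | step hmem hsub =>
      rename_i c
      have hc : c = Cch j ∨ c = .leaf 87 10 := by simpa using hmem
      rcases hc with h' | h'
      · subst h'; exact ih hsub
      · subst h'; exact absurd hsub no_subtree_node_leaf

lemma binary_Gk (n : ℕ) : IsBinary (Gk n) := by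
  intro cs h
  cases h with
  | refl => rfl
  | step hmem hsub =>
    rename_i c
    have hc : c = Atree n ∨ c = GTree.leaf 80 40 := by simpa using hmem
    rcases hc with h' | h'
    · subst h'
      cases hsub with
      | refl => rfl
      | step hmem2 hsub2 =>
        rename_i c2
        have hc2 : c2 = GTree.leaf 90 20 ∨ c2 = Cch n := by simpa [Atree] using hmem2
        rcases hc2 with h'' | h''
        · subst h''; exact absurd hsub2 no_subtree_node_leaf
        · subst h''; exact binary_Cch n hsub2
    · subst h'; exact absurd hsub no_subtree_node_leaf

lemma wf_Gk (n : ℕ) : WF (Gk n) := by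
  intro cs h hnil
  have := binary_Gk n cs h
  rw [hnil] at this
  simp at this

/-! ### Leaves -/

lemma leaves_node_cons (c : GTree) (cs : List GTree) :
    leaves (.node (c :: cs)) = leaves c ++ leaves (.node cs) := by
  simp [leaves]

lemma mem_leaves_Cch (j : ℕ) : ((85 : ℝ), (50 : ℝ)) ∈ leaves (Cch j) := by
  induction j with
  | zero => simp [Cch, leaves]
  | succ j ih =>
    show _ ∈ leaves (.node [Cch j, .leaf 87 10])
    rw [leaves_node_cons]
    exact List.mem_append_left _ ih

lemma mem_leaves_Gk (n : ℕ) : ((85 : ℝ), (50 : ℝ)) ∈ leaves (Gk n) := by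
  show _ ∈ leaves (.node [Atree n, .leaf 80 40])
  rw [leaves_node_cons]
  apply List.mem_append_left
  show _ ∈ leaves (.node [.leaf 90 20, Cch n])
  rw [leaves_node_cons]
  apply List.mem_append_right
  rw [leaves_node_cons]
  exact List.mem_append_left _ (mem_leaves_Cch n)

end GTree
namespace GTree

lemma outcome_leaf (γ : Profile) (a b : ℝ) (B : ℕ) :
    outcome γ (.leaf a b) B = (a, b) := by
  simp [outcome, playAux, height]

lemma height_CchNode (j : ℕ) : height (.node [Cch j, .leaf 87 10]) = j + 1 :=
  height_Cch (j + 1)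

lemma height_AtreeNode (n : ℕ) : height (.node [.leaf 90 20, Cch n]) = n + 1 :=
  height_Atree n

lemma height_GkNode (n : ℕ) : height (.node [Atree n, .leaf 80 40]) = n + 2 :=
  height_Gk n

section main

variable {M n : ℕ} {γ : Profile}

/-- In the chain, player 2 can only reach `(85,50)` by strictly outbidding
player 1 at every level, at least doubling player 1's wealth each time. -/
lemma Cforce (hγ : IsPSPE M γ (Gk n)) :
    ∀ j, j ≤ n → ∀ x, x ≤ M →
      outcome γ (Cch j) x = (87, 10) ∨
      (outcome γ (Cch j) x = (85, 50) ∧ 2 ^ j * (x + 1) ≤ M + 1) := by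
  intro j
  induction j with
  | zero =>
    intro _ x hx
    right
    refine ⟨outcome_leaf γ 85 50 x, ?_⟩
    simpa using Nat.succ_le_succ hx
  | succ j ih =>
    intro hj x hx
    have hsub : Subtree (.node [Cch j, .leaf 87 10]) (Gk n) := subtree_Cch_Gk hj
    obtain ⟨⟨hb1, hb2, hi1, hi2⟩, heq⟩ := hγ _ hsub x hx
    set a := γ (.node [Cch j, .leaf 87 10]) x with ha
    have hfuel : ∀ i B, playAux γ j ([Cch j, .leaf 87 10].getD i (.leaf 0 0)) B
        = outcome γ ([Cch j, .leaf 87 10].getD i (.leaf 0 0)) B := by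
      intro i B
      refine playAux_of_le γ j _ ?_ B
      have := height_getD_lt (cs := [Cch j, .leaf 87 10]) i
      rw [height_CchNode] at this
      omega
    have hout : outcome γ (Cch (j+1)) x =
        (if a.2.1 ≤ a.1 then
          outcome γ ([Cch j, .leaf 87 10].getD a.2.2.1 (.leaf 0 0)) (x - a.1)
        else
          outcome γ ([Cch j, .leaf 87 10].getD a.2.2.2 (.leaf 0 0)) (x + a.2.1)) := by
      have h1 : outcome γ (Cch (j+1)) x = playAux γ (j+1) (.node [Cch j, .leaf 87 10]) x := by
        rw [outcome, height_Cch]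
        rfl
      rw [h1]
      simp only [playAux, ← ha]
      split_ifs with h
      · exact hfuel _ _
      · exact hfuel _ _
    simp only [List.length_cons, List.length_nil] at hi1 hi2
    by_cases hb : a.2.1 ≤ a.1
    · -- player 1 wins
      rw [if_pos hb] at hout
      have hi : a.2.2.1 = 0 ∨ a.2.2.1 = 1 := by omega
      rcases hi with hi | hi
      · -- player 1 continues the chain: impossible unless the chain yields (87,10)
        have hgd : [Cch j, .leaf 87 10].getD a.2.2.1 (.leaf 0 0) = Cch j := by
          rw [hi]; rfl
        rw [hgd] at hout
        rcases ih (by omega) (x - a.1) (by omega) with hcase | ⟨he, _⟩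
        · left; rw [hout, hcase]
        · -- equilibrium choice: player 1 would deviate to the leaf (87,10)
          exfalso
          have h1 := heq.1 (.leaf 87 10) (by simp)
          rw [hgd, he, outcome_leaf] at h1
          norm_num at h1
      · have hgd : [Cch j, .leaf 87 10].getD a.2.2.1 (.leaf 0 0) = .leaf 87 10 := by
          rw [hi]; rfl
        rw [hgd, outcome_leaf] at hout
        left; exact hout
    · -- player 2 wins
      rw [if_neg hb] at hout
      have hxb : x + a.2.1 ≤ M := by omega
      have hi : a.2.2.2 = 0 ∨ a.2.2.2 = 1 := by omega
      rcases hi with hi | hi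
      · have hgd : [Cch j, .leaf 87 10].getD a.2.2.2 (.leaf 0 0) = Cch j := by
          rw [hi]; rfl
        rw [hgd] at hout
        rcases ih (by omega) (x + a.2.1) hxb with hcase | ⟨he, hbd⟩
        · left; rw [hout, hcase]
        · right
          refine ⟨by rw [hout, he], ?_⟩
          -- player 2 must strictly overbid player 1's whole budget
          have hlt : x < a.2.1 := by
            by_contra hle
            push_neg at hle
            have h3 := heq.2.2
            rw [if_neg hb] at h3
            have h33 := h3.2.2 a.2.1 hle le_rfl (.leaf 87 10) (by simp)
            rw [hgd, he, outcome_leaf] at h33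
            norm_num at h33
          calc 2 ^ (j+1) * (x + 1) = 2 ^ j * (2 * (x + 1)) := by ring
            _ ≤ 2 ^ j * ((x + a.2.1) + 1) := Nat.mul_le_mul_left _ (by omega)
            _ ≤ M + 1 := hbd
      · have hgd : [Cch j, .leaf 87 10].getD a.2.2.2 (.leaf 0 0) = .leaf 87 10 := by
          rw [hi]; rfl
        rw [hgd, outcome_leaf] at hout
        left; exact hout

/-- When the budget bound holds, the end of the chain is out of reach. -/
lemma Cout (hγ : IsPSPE M γ (Gk n)) (hM2 : M + 1 < 2 ^ n) :
    ∀ x, x ≤ M → outcome γ (Cch n) x = (87, 10) := by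
  intro x hx
  rcases Cforce hγ n le_rfl x hx with h | ⟨_, hbd⟩
  · exact h
  · exfalso
    have h1 : 2 ^ n ≤ 2 ^ n * (x + 1) := Nat.le_mul_of_pos_right _ (by omega)
    omega

/-- The left subtree always resolves to `(90,20)`. -/
lemma Aforce (hγ : IsPSPE M γ (Gk n)) (hM2 : M + 1 < 2 ^ n) :
    ∀ x, x ≤ M → outcome γ (Atree n) x = (90, 20) := by
  intro x hx
  have hsub : Subtree (.node [.leaf 90 20, Cch n]) (Gk n) := subtree_Atree_Gk n
  obtain ⟨⟨hb1, hb2, hi1, hi2⟩, heq⟩ := hγ _ hsub x hx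
  set a := γ (.node [.leaf 90 20, Cch n]) x with ha
  have hfuel : ∀ i B, playAux γ n ([GTree.leaf 90 20, Cch n].getD i (.leaf 0 0)) B
      = outcome γ ([GTree.leaf 90 20, Cch n].getD i (.leaf 0 0)) B := by
    intro i B
    refine playAux_of_le γ n _ ?_ B
    have := height_getD_lt (cs := [.leaf 90 20, Cch n]) i
    rw [height_AtreeNode] at this
    omega
  have hout : outcome γ (Atree n) x =
      (if a.2.1 ≤ a.1 then
        outcome γ ([GTree.leaf 90 20, Cch n].getD a.2.2.1 (.leaf 0 0)) (x - a.1)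
      else
        outcome γ ([GTree.leaf 90 20, Cch n].getD a.2.2.2 (.leaf 0 0)) (x + a.2.1)) := by
    have h1 : outcome γ (Atree n) x = playAux γ (n+1) (.node [.leaf 90 20, Cch n]) x := by
      rw [outcome, height_Atree]
      rfl
    rw [h1]
    simp only [playAux, ← ha]
    split_ifs with h
    · exact hfuel _ _
    · exact hfuel _ _
  simp only [List.length_cons, List.length_nil] at hi1 hi2
  by_cases hb : a.2.1 ≤ a.1
  · rw [if_pos hb] at hout
    have hi : a.2.2.1 = 0 ∨ a.2.2.1 = 1 := by omega
    rcases hi with hi | hi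
    · have hgd : [GTree.leaf 90 20, Cch n].getD a.2.2.1 (.leaf 0 0) = .leaf 90 20 := by
        rw [hi]; rfl
      rw [hgd, outcome_leaf] at hout
      exact hout
    · exfalso
      have hgd : [GTree.leaf 90 20, Cch n].getD a.2.2.1 (.leaf 0 0) = Cch n := by
        rw [hi]; rfl
      have h1 := heq.1 (.leaf 90 20) (by simp)
      rw [hgd, outcome_leaf, Cout hγ hM2 (x - a.1) (by omega)] at h1
      norm_num at h1
  · rw [if_neg hb] at hout
    have hxb : x + a.2.1 ≤ M := by omega
    have hi : a.2.2.2 = 0 ∨ a.2.2.2 = 1 := by omega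
    rcases hi with hi | hi
    · have hgd : [GTree.leaf 90 20, Cch n].getD a.2.2.2 (.leaf 0 0) = .leaf 90 20 := by
        rw [hi]; rfl
      rw [hgd, outcome_leaf] at hout
      exact hout
    · exfalso
      have hgd : [GTree.leaf 90 20, Cch n].getD a.2.2.2 (.leaf 0 0) = Cch n := by
        rw [hi]; rfl
      have h2 := heq.2.1 (.leaf 90 20) (by simp)
      rw [hgd, outcome_leaf, Cout hγ hM2 (x + a.2.1) hxb] at h2
      norm_num at h2

/-- With an empty budget for player 1 the play is forced into the
Pareto-dominated leaf `(80,40)`. -/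
lemma Gforce (hγ : IsPSPE M γ (Gk n)) (hM0 : 0 < M) (hM2 : M + 1 < 2 ^ n) :
    outcome γ (Gk n) 0 = (80, 40) := by
  have hsub : Subtree (.node [Atree n, .leaf 80 40]) (Gk n) := .refl _
  obtain ⟨⟨hb1, hb2, hi1, hi2⟩, heq⟩ := hγ _ hsub 0 (by omega)
  set a := γ (.node [Atree n, .leaf 80 40]) 0 with ha
  have ha1 : a.1 = 0 := by omega
  have hfuel : ∀ i B, playAux γ (n+1) ([Atree n, GTree.leaf 80 40].getD i (.leaf 0 0)) B
      = outcome γ ([Atree n, GTree.leaf 80 40].getD i (.leaf 0 0)) B := by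
    intro i B
    refine playAux_of_le γ (n+1) _ ?_ B
    have := height_getD_lt (cs := [Atree n, .leaf 80 40]) i
    rw [height_GkNode] at this
    omega
  have hout : outcome γ (Gk n) 0 =
      (if a.2.1 ≤ a.1 then
        outcome γ ([Atree n, GTree.leaf 80 40].getD a.2.2.1 (.leaf 0 0)) (0 - a.1)
      else
        outcome γ ([Atree n, GTree.leaf 80 40].getD a.2.2.2 (.leaf 0 0)) (0 + a.2.1)) := by
    have h1 : outcome γ (Gk n) 0 = playAux γ (n+2) (.node [Atree n, .leaf 80 40]) 0 := by
      rw [outcome, height_Gk]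
      rfl
    rw [h1]
    simp only [playAux, ← ha]
    split_ifs with h
    · exact hfuel _ _
    · exact hfuel _ _
  simp only [List.length_cons, List.length_nil] at hi1 hi2
  by_cases hb : a.2.1 ≤ a.1
  · -- player 1 cannot win the root auction: player 2 would overbid for (80,40)
    exfalso
    have h3 := heq.2.2
    rw [if_pos hb] at h3
    have h33 := h3.2.2 1 (by omega) (by omega) (.leaf 80 40) (by simp)
    have hi : a.2.2.1 = 0 ∨ a.2.2.1 = 1 := by omega
    rcases hi with hi | hi
    · have hgd : [Atree n, GTree.leaf 80 40].getD a.2.2.1 (.leaf 0 0) = Atree n := by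
        rw [hi]; rfl
      rw [hgd, outcome_leaf, Aforce hγ hM2 (0 - a.1) (by omega)] at h33
      norm_num at h33
    · have hgd : [Atree n, GTree.leaf 80 40].getD a.2.2.1 (.leaf 0 0) = .leaf 80 40 := by
        rw [hi]; rfl
      have h1 := heq.1 (Atree n) (by simp)
      rw [hgd, outcome_leaf, Aforce hγ hM2 (0 - a.1) (by omega)] at h1
      norm_num at h1
  · rw [if_neg hb] at hout
    have hxb : 0 + a.2.1 ≤ M := by omega
    have hi : a.2.2.2 = 0 ∨ a.2.2.2 = 1 := by omega
    rcases hi with hi | hi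
    · -- player 2 never moves into the left subtree: it only gives her 20 < 40
      exfalso
      have hgd : [Atree n, GTree.leaf 80 40].getD a.2.2.2 (.leaf 0 0) = Atree n := by
        rw [hi]; rfl
      have h2 := heq.2.1 (.leaf 80 40) (by simp)
      rw [hgd, outcome_leaf, Aforce hγ hM2 (0 + a.2.1) hxb] at h2
      norm_num at h2
    · have hgd : [Atree n, GTree.leaf 80 40].getD a.2.2.2 (.leaf 0 0) = .leaf 80 40 := by
        rw [hi]; rfl
      rw [hgd, outcome_leaf] at hout
      exact hout

end main

end GTree

open GTree

/-- For every `k` there is a binary bidding game `G_k` such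
that, when played with discrete integer budgets summing to any positive `M < 2^k`,
no pure subgame-perfect equilibrium is Pareto-optimal: every PSPE has, for some
budget partition, an outcome that is strictly Pareto-dominated by some leaf. -/
theorem stmt10 (k : ℕ) :
    ∃ G : GTree, WF G ∧ IsBinary G ∧
      ∀ M : ℕ, 0 < M → M < 2 ^ k →
        ∀ γ : Profile, IsPSPE M γ G →
          ∃ B1 ≤ M, ∃ t' ∈ leaves G,
            (outcome γ G B1).1 < t'.1 ∧ (outcome γ G B1).2 < t'.2 := by
  refine ⟨Gk (k+1), wf_Gk _, binary_Gk _, ?_⟩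
  intro M hM0 hMk γ hγ
  have hM2 : M + 1 < 2 ^ (k+1) := by
    have h1 : 1 ≤ 2 ^ k := Nat.one_le_two_pow
    have h2 : 2 ^ (k+1) = 2 ^ k * 2 := pow_succ 2 k
    omega
  have hroot := Gforce hγ hM0 hM2
  refine ⟨0, Nat.zero_le _, ((85 : ℝ), (50 : ℝ)), mem_leaves_Gk _, ?_, ?_⟩ <;>
    rw [hroot] <;> norm_num
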